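/- Let L, σ, L_R, r₀ > 0, let M, T, H be positive natural numbers, and set γ = min{ 1/(6L), r₀√M/(σ√T), (r₀²/(L_R σ² T H))^{1/3} }. Let a, e : ℕ → ℝ be sequences with a(t) ≥ 0 and e(t) ≥ 0 for all t, a(0) = r₀², such that (γ/6)·e(t) ≤ a(t) − a(t+1) + γ²σ²/M + 2L_R(H−1)γ³σ² for all 0 ≤ t < T. Then (1/T)·Σ_{t=0}^{T−1} e(t) ≤ 36L·r₀²/T + 12·σ·r₀/√(MT) + 18·(L_R σ² r₀⁴ H / T²)^{1/3}. -/

import Mathlib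

set_option maxHeartbeats 1000000

private lemma cube_root_cube {x : ℝ} (hx : 0 ≤ x) : (x ^ 3 : ℝ) ^ ((1:ℝ)/3) = x := by
  rw [← Real.rpow_natCast x 3, ← Real.rpow_mul hx]
  norm_num

private lemma rpow_third_cube {A : ℝ} (hA : 0 ≤ A) : (A ^ ((1:ℝ)/3)) ^ 3 = A := by
  rw [← Real.rpow_natCast (A ^ ((1:ℝ)/3)) 3, ← Real.rpow_mul hA]
  norm_num

theorem stmt_18 (L σ LR r0 : ℝ) (hL : 0 < L) (hσ : 0 < σ) (hLR : 0 < LR) (hr0 : 0 < r0)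
    (M T H : ℕ) (hM : 0 < M) (hT : 0 < T) (hH : 0 < H)
    (γ : ℝ)
    (hγ : γ = min (1 / (6 * L)) (min (r0 * Real.sqrt M / (σ * Real.sqrt T))
      ((r0 ^ 2 / (LR * σ ^ 2 * T * H)) ^ ((1 : ℝ) / 3))))
    (a e : ℕ → ℝ) (ha : ∀ t, 0 ≤ a t) (he : ∀ t, 0 ≤ e t) (ha0 : a 0 = r0 ^ 2)
    (hrec : ∀ t < T, γ / 6 * e t
      ≤ a t - a (t + 1) + γ ^ 2 * σ ^ 2 / M + 2 * LR * ((H : ℝ) - 1) * γ ^ 3 * σ ^ 2) :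
    1 / T * ∑ t ∈ Finset.range T, e t
      ≤ 36 * L * r0 ^ 2 / T + 12 * σ * r0 / Real.sqrt (M * T)
        + 18 * (LR * σ ^ 2 * r0 ^ 4 * H / T ^ 2) ^ ((1 : ℝ) / 3) := by
  have hMR : (0:ℝ) < M := by exact_mod_cast hM
  have hTR : (0:ℝ) < T := by exact_mod_cast hT
  have hHR : (0:ℝ) < H := by exact_mod_cast hH
  have hsM : (0:ℝ) < Real.sqrt M := Real.sqrt_pos.mpr hMR
  have hsT : (0:ℝ) < Real.sqrt T := Real.sqrt_pos.mpr hTR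
  set γ1 : ℝ := 1 / (6 * L) with hγ1
  set γ2 : ℝ := r0 * Real.sqrt M / (σ * Real.sqrt T) with hγ2
  set A : ℝ := r0 ^ 2 / (LR * σ ^ 2 * T * H) with hA
  set γ3 : ℝ := A ^ ((1:ℝ)/3) with hγ3
  set B : ℝ := LR * σ ^ 2 * r0 ^ 4 * H / T ^ 2 with hB
  have hApos : 0 < A := by positivity
  have hBpos : 0 < B := by positivity
  have hγ1p : 0 < γ1 := by positivity
  have hγ2p : 0 < γ2 := by positivity
  have hγ3p : 0 < γ3 := Real.rpow_pos_of_pos hApos _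
  have hγp : 0 < γ := by
    rw [hγ]; exact lt_min hγ1p (lt_min hγ2p hγ3p)
  have hγle2 : γ ≤ γ2 := le_trans (by rw [hγ]; exact min_le_right _ _) (min_le_left _ _)
  have hγle3 : γ ≤ γ3 := le_trans (by rw [hγ]; exact min_le_right _ _) (min_le_right _ _)
  have hinv : 1 / γ ≤ 1 / γ1 + 1 / γ2 + 1 / γ3 := by
    have h1 : 0 < 1 / γ1 := by positivity
    have h2 : 0 < 1 / γ2 := by positivity
    have h3 : 0 < 1 / γ3 := by positivity
    rcases min_cases γ1 (min γ2 γ3) with ⟨h, _⟩ | ⟨h, _⟩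
    · rw [hγ, h]; linarith
    · rcases min_cases γ2 γ3 with ⟨h', _⟩ | ⟨h', _⟩
      · rw [hγ, h, h']; linarith
      · rw [hγ, h, h']; linarith
  set S : ℝ := ∑ t ∈ Finset.range T, e t with hS
  have hSnn : 0 ≤ S := Finset.sum_nonneg fun t _ => he t
  have hsum : γ / 6 * S ≤ r0 ^ 2 + T * (γ ^ 2 * σ ^ 2 / M) + T * (2 * LR * H * γ ^ 3 * σ ^ 2) := by
    have h1 : γ / 6 * S ≤ ∑ t ∈ Finset.range T,
        (a t - a (t + 1) + γ ^ 2 * σ ^ 2 / M + 2 * LR * ((H : ℝ) - 1) * γ ^ 3 * σ ^ 2) := by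
      rw [hS, Finset.mul_sum]
      exact Finset.sum_le_sum fun t ht => hrec t (Finset.mem_range.mp ht)
    have h2 : ∑ t ∈ Finset.range T,
        (a t - a (t + 1) + γ ^ 2 * σ ^ 2 / M + 2 * LR * ((H : ℝ) - 1) * γ ^ 3 * σ ^ 2)
        = (a 0 - a T) + T * (γ ^ 2 * σ ^ 2 / M) + T * (2 * LR * ((H : ℝ) - 1) * γ ^ 3 * σ ^ 2) := by
      rw [Finset.sum_add_distrib, Finset.sum_add_distrib, Finset.sum_range_sub' a,
        Finset.sum_const, Finset.sum_const, Finset.card_range]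
      push_cast; ring
    have h0 : 0 ≤ 2 * LR * γ ^ 3 * σ ^ 2 := by positivity
    have h3 : 2 * LR * ((H : ℝ) - 1) * γ ^ 3 * σ ^ 2 ≤ 2 * LR * H * γ ^ 3 * σ ^ 2 := by
      have hr : 2 * LR * (H:ℝ) * γ ^ 3 * σ ^ 2 - 2 * LR * ((H:ℝ) - 1) * γ ^ 3 * σ ^ 2
          = 2 * LR * γ ^ 3 * σ ^ 2 := by ring
      linarith
    have haT := ha T
    calc γ / 6 * S ≤ _ := h1
      _ = _ := h2
      _ ≤ r0 ^ 2 + T * (γ ^ 2 * σ ^ 2 / M) + T * (2 * LR * H * γ ^ 3 * σ ^ 2) := by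
          rw [ha0]
          have := mul_le_mul_of_nonneg_left h3 hTR.le
          linarith
  have hmain : 1 / T * S ≤ 6 * r0 ^ 2 / (γ * T) + 6 * γ * σ ^ 2 / M + 12 * LR * H * γ ^ 2 * σ ^ 2 := by
    have h := mul_le_mul_of_nonneg_left hsum (by positivity : (0:ℝ) ≤ 6 / (γ * T))
    have heq : 6 / (γ * T) * (γ / 6 * S) = 1 / T * S := by
      field_simp
    have heq2 : 6 / (γ * T) * (r0 ^ 2 + T * (γ ^ 2 * σ ^ 2 / M) + T * (2 * LR * H * γ ^ 3 * σ ^ 2))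
        = 6 * r0 ^ 2 / (γ * T) + 6 * γ * σ ^ 2 / M + 12 * LR * H * γ ^ 2 * σ ^ 2 := by
      field_simp; ring
    rw [heq, heq2] at h; exact h
  have hγ3cube : γ3 ^ 3 = A := rpow_third_cube hApos.le
  have e1 : r0 ^ 2 / (γ1 * T) = 6 * L * r0 ^ 2 / T := by
    rw [hγ1]; field_simp
  have hTsq : Real.sqrt T * Real.sqrt T = (T:ℝ) := Real.mul_self_sqrt hTR.le
  have hMsq : Real.sqrt M * Real.sqrt M = (M:ℝ) := Real.mul_self_sqrt hMR.le
  have hMT : Real.sqrt ((M:ℝ) * T) = Real.sqrt M * Real.sqrt T := Real.sqrt_mul hMR.le _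
  have e2 : r0 ^ 2 / (γ2 * T) = σ * r0 / Real.sqrt ((M:ℝ) * T) := by
    rw [hγ2, hMT, div_eq_div_iff (by positivity) (by positivity)]
    field_simp
    linear_combination hTsq
  have e2' : γ2 * σ ^ 2 / M = σ * r0 / Real.sqrt ((M:ℝ) * T) := by
    rw [hγ2, hMT, div_eq_div_iff (by positivity) (by positivity)]
    field_simp
    linear_combination hMsq
  have e3 : r0 ^ 2 / (γ3 * T) = B ^ ((1:ℝ)/3) := by
    have hc : (0:ℝ) ≤ r0 ^ 2 / (γ3 * T) := by positivity
    have hcube : (r0 ^ 2 / (γ3 * T)) ^ 3 = B := by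
      rw [div_pow, mul_pow, hγ3cube, hA, hB]
      field_simp
    rw [← hcube, cube_root_cube hc]
  have e4 : LR * H * γ3 ^ 2 * σ ^ 2 = B ^ ((1:ℝ)/3) := by
    have hc : (0:ℝ) ≤ LR * H * γ3 ^ 2 * σ ^ 2 := by positivity
    have hcube : (LR * H * γ3 ^ 2 * σ ^ 2) ^ 3 = B := by
      have h6 : γ3 ^ 6 = A ^ 2 := by
        have : γ3 ^ 6 = (γ3 ^ 3) ^ 2 := by ring
        rw [this, hγ3cube]
      have hr : (LR * H * γ3 ^ 2 * σ ^ 2) ^ 3 = LR ^ 3 * (H:ℝ) ^ 3 * σ ^ 6 * γ3 ^ 6 := by ring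
      rw [hr, h6, hA, hB]
      field_simp
    rw [← hcube, cube_root_cube hc]
  have b1 : 6 * r0 ^ 2 / (γ * T) ≤ 36 * L * r0 ^ 2 / T + 6 * (σ * r0 / Real.sqrt ((M:ℝ) * T))
      + 6 * B ^ ((1:ℝ)/3) := by
    have hrw : 6 * r0 ^ 2 / (γ * T) = 6 * r0 ^ 2 / T * (1 / γ) := by
      field_simp
    rw [hrw]
    have h := mul_le_mul_of_nonneg_left hinv (by positivity : (0:ℝ) ≤ 6 * r0 ^ 2 / T)
    calc 6 * r0 ^ 2 / T * (1 / γ) ≤ 6 * r0 ^ 2 / T * (1 / γ1 + 1 / γ2 + 1 / γ3) := h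
      _ = 6 * (r0 ^ 2 / (γ1 * T)) + 6 * (r0 ^ 2 / (γ2 * T)) + 6 * (r0 ^ 2 / (γ3 * T)) := by
          field_simp
      _ = 36 * L * r0 ^ 2 / T + 6 * (σ * r0 / Real.sqrt ((M:ℝ) * T)) + 6 * B ^ ((1:ℝ)/3) := by
          rw [e1, e2, e3]; ring
  have b2 : 6 * γ * σ ^ 2 / M ≤ 6 * (σ * r0 / Real.sqrt ((M:ℝ) * T)) := by
    have h : 6 * γ * σ ^ 2 / M ≤ 6 * γ2 * σ ^ 2 / M := by gcongr
    have h' : 6 * γ2 * σ ^ 2 / M = 6 * (γ2 * σ ^ 2 / M) := by ring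
    rw [h', e2'] at h; exact h
  have b3 : 12 * LR * H * γ ^ 2 * σ ^ 2 ≤ 12 * B ^ ((1:ℝ)/3) := by
    have h : 12 * LR * H * γ ^ 2 * σ ^ 2 ≤ 12 * LR * H * γ3 ^ 2 * σ ^ 2 := by
      gcongr
    have h' : 12 * LR * (H:ℝ) * γ3 ^ 2 * σ ^ 2 = 12 * (LR * H * γ3 ^ 2 * σ ^ 2) := by ring
    rw [h', e4] at h; exact h
  have hgoalMT : ((M:ℝ) * T) = ((M * T : ℕ) : ℝ) := by push_cast; ring
  have : 1 / (T:ℝ) * S ≤ 36 * L * r0 ^ 2 / T + 12 * (σ * r0 / Real.sqrt ((M:ℝ) * T))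
      + 18 * B ^ ((1:ℝ)/3) := by linarith
  calc 1 / (T:ℝ) * S ≤ _ := this
    _ = 36 * L * r0 ^ 2 / T + 12 * σ * r0 / Real.sqrt ((M:ℝ) * T) + 18 * B ^ ((1:ℝ)/3) := by
        ring
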